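/- Let r, s ≥ 0 and let m₁, …, m_s be integers with m_i ≥ 2 for all i. Let G = 𝔽_r * ℤ_{m₁} * ⋯ * ℤ_{m_s}. Then G is Hopfian: every surjective group homomorphism φ : G → G is an isomorphism. -/

import Mathlib

set_option linter.unusedSectionVars false

noncomputable section
namespace Stmt4Aux

open Monoid Monoid.CoprodI Monoid.CoprodI.Word Multiplicative

variable {ι : Type} [DecidableEq ι] {M : ι → Type} [∀ i, Group (M i)]
  [∀ i, DecidableEq (M i)]

theorem exists_cons_of_fstIdx {w : Word M} {i : ι} (h : w.fstIdx = some i) :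
    ∃ (g : M i) (w' : Word M) (h1 : w'.fstIdx ≠ some i) (h2 : g ≠ 1),
      w = Word.cons g w' h1 h2 := by
  induction w using Word.consRecOn with
  | empty => simp [Word.fstIdx, Word.empty] at h
  | cons j g w' h1 h2 _ =>
    rw [Word.fstIdx_cons] at h
    obtain rfl : j = i := by simpa using h
    exact ⟨g, w', h1, h2, rfl⟩

theorem length_rcons {i : ι} (p : Pair M i) :
    (Word.rcons p).toList.length =
      if p.head = 1 then p.tail.toList.length else p.tail.toList.length + 1 := by
  rw [Word.rcons]; split <;> simp [Word.cons, *]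

theorem smul_cons_same {i : ι} (g g' : M i) (w' : Word M) (h1 : w'.fstIdx ≠ some i)
    (h2 : g' ≠ 1) :
    of g • Word.cons g' w' h1 h2 = Word.rcons ⟨g * g', w', h1⟩ := by
  rw [Word.cons_eq_smul, ← mul_smul, ← map_mul, Word.of_smul_def,
    Word.equivPair_eq_of_fstIdx_ne h1]
  simp

theorem smul_of_fstIdx_ne {i : ι} (g : M i) {w : Word M} (h : w.fstIdx ≠ some i) :
    of g • w = Word.rcons ⟨g, w, h⟩ := by
  rw [Word.of_smul_def, Word.equivPair_eq_of_fstIdx_ne h]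
  simp

theorem length_smul_of_fstIdx_eq {i : ι} (g : M i) {w : Word M} (h : w.fstIdx = some i) :
    (of g • w).toList.length ≤ w.toList.length := by
  obtain ⟨g', w', h1, h2, rfl⟩ := exists_cons_of_fstIdx h
  rw [smul_cons_same, length_rcons]
  split <;> simp [Word.cons]

theorem smul_eq_cons_of_fstIdx_ne {i : ι} {g : M i} {w : Word M} (hg : g ≠ 1)
    (h : w.fstIdx ≠ some i) : of g • w = Word.cons g w h hg := by
  rw [smul_of_fstIdx_ne g h, Word.rcons, dif_neg hg]

end Stmt4Aux

namespace Stmt4Aux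
open Monoid Monoid.CoprodI Monoid.CoprodI.Word Multiplicative

variable {ι : Type} [DecidableEq ι] {M : ι → Type} [∀ i, Group (M i)]
  [∀ i, DecidableEq (M i)]

variable (M) in
abbrev BWord (n : ℕ) : Type := {w : Word M // w.toList.length ≤ n}

instance (n : ℕ) [Finite ι] [∀ i, Finite (M i)] : Finite (BWord M n) := by
  have : Finite {l : List (Σ i, M i) // l.length ≤ n} :=
    (List.finite_length_le (Σ i, M i) n).to_subtype
  exact Finite.of_injective
    (fun w => (⟨w.1.toList, w.2⟩ : {l : List (Σ i, M i) // l.length ≤ n}))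
    (by rintro ⟨w1, hh1⟩ ⟨w2, hh2⟩ h
        simp only [Subtype.mk_eq_mk] at h
        exact Subtype.ext (Word.ext h))

def act {n : ℕ} (i : ι) (g : M i) (w : BWord M n) : BWord M n :=
  if h : (of g • w.1).toList.length ≤ n then ⟨of g • w.1, h⟩ else w

theorem act_one {n : ℕ} (i : ι) (w : BWord M n) : act i (1 : M i) w = w := by
  rw [act]
  simp only [map_one, one_smul]
  rw [dif_pos w.2]

theorem not_le_char {n : ℕ} {i : ι} {g : M i} {w : Word M} (hw : w.toList.length ≤ n)
    (h : ¬ (of g • w).toList.length ≤ n) :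
    g ≠ 1 ∧ w.fstIdx ≠ some i ∧ w.toList.length = n := by
  have hg : g ≠ 1 := by rintro rfl; rw [map_one, one_smul] at h; exact h hw
  have hf : w.fstIdx ≠ some i := by
    intro hf; exact h ((length_smul_of_fstIdx_eq g hf).trans hw)
  rw [smul_eq_cons_of_fstIdx_ne hg hf] at h
  simp only [Word.cons, List.length_cons, not_le, Nat.lt_succ_iff] at h
  exact ⟨hg, hf, le_antisymm hw h⟩

theorem act_eq_self_of_full {n : ℕ} {i : ι} (a : M i) (w : BWord M n)
    (hf : w.1.fstIdx ≠ some i) (hl : w.1.toList.length = n) : act i a w = w := by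
  by_cases ha : a = 1
  · subst ha; exact act_one i w
  · rw [act, dif_neg]
    rw [smul_eq_cons_of_fstIdx_ne ha hf]
    simp [Word.cons, hl]

theorem act_mul {n : ℕ} (i : ι) (g g' : M i) (w : BWord M n) :
    act i (g * g') w = act i g (act i g' w) := by
  have hmul : of (g * g') • w.1 = of g • of g' • w.1 := by rw [map_mul, mul_smul]
  by_cases h' : (of g' • w.1).toList.length ≤ n
  · have hact' : act i g' w = ⟨of g' • w.1, h'⟩ := by rw [act, dif_pos h']
    by_cases h2 : (of g • (of g' • w.1)).toList.length ≤ n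
    · rw [hact', act, act]
      simp only
      rw [dif_pos h2, dif_pos (by rw [hmul]; exact h2)]
      exact Subtype.ext hmul
    · obtain ⟨hg, hf', hlen'⟩ := not_le_char h' h2
      have hg'1 : g' = 1 := by
        by_contra hg'
        by_cases hfw : w.1.fstIdx = some i
        · obtain ⟨a, w₂, ha1, ha2, hw2⟩ := exists_cons_of_fstIdx hfw
          rw [hw2, smul_cons_same] at hf' hlen'
          by_cases hga : g' * a = 1
          · rw [Word.rcons, dif_pos hga] at hlen'
            have hww := w.2
            rw [hw2] at hww
            simp only [Word.cons, List.length_cons] at hww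
            simp only at hlen'
            omega
          · rw [Word.rcons, dif_neg hga] at hf'
            exact hf' (Word.fstIdx_cons _ _ _ _)
        · rw [smul_eq_cons_of_fstIdx_ne hg' hfw] at hf'
          exact hf' (Word.fstIdx_cons _ _ _ _)
      subst hg'1
      rw [mul_one, act_one]
  · obtain ⟨hg', hf, hlen⟩ := not_le_char w.2 h'
    have hact' : act i g' w = w := by rw [act, dif_neg h']
    rw [hact', act_eq_self_of_full _ _ hf hlen]
    exact (act_eq_self_of_full g w hf hlen).symm

end Stmt4Aux

namespace Stmt4Aux
open Monoid Monoid.CoprodI Monoid.CoprodI.Word Multiplicative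

variable {ι : Type} [DecidableEq ι] {M : ι → Type} [∀ i, Group (M i)]
  [∀ i, DecidableEq (M i)]

def perm {n : ℕ} (i : ι) (g : M i) : Equiv.Perm (BWord M n) where
  toFun := act i g
  invFun := act i g⁻¹
  left_inv := fun w => by rw [← act_mul, inv_mul_cancel, act_one]
  right_inv := fun w => by rw [← act_mul, mul_inv_cancel, act_one]

def tohom (n : ℕ) (i : ι) : M i →* Equiv.Perm (BWord M n) where
  toFun := perm i
  map_one' := Equiv.ext fun w => act_one i w
  map_mul' := fun g g' => Equiv.ext fun w => act_mul i g g' w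

def rho (n : ℕ) : CoprodI M →* Equiv.Perm (BWord M n) :=
  CoprodI.lift (tohom n)

def bempty (n : ℕ) : BWord M n := ⟨Word.empty, by simp [Word.empty]⟩

theorem rho_prod_apply {n : ℕ} (w : Word M) (hw : w.toList.length ≤ n) :
    rho n w.prod (bempty n) = ⟨w, hw⟩ := by
  induction w using Word.consRecOn with
  | empty => rw [Word.prod_empty, map_one]; rfl
  | cons i g w' h1 h2 ih =>
    have hlc : (Word.cons g w' h1 h2).toList.length = w'.toList.length + 1 := by
      simp [Word.cons]
    have hw' : w'.toList.length ≤ n := by omega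
    rw [Word.prod_cons, map_mul, rho, CoprodI.lift_of, Equiv.Perm.mul_apply]
    rw [← rho, ih hw']
    show act i g ⟨w', hw'⟩ = _
    rw [act, dif_pos]
    · exact Subtype.ext (Word.cons_eq_smul (h1 := h1) (h2 := h2)).symm
    · rw [← Word.cons_eq_smul (h1 := h1) (h2 := h2), hlc]
      omega

theorem prod_equiv_self (h : CoprodI M) : (Word.equiv h).prod = h := by
  have : Word.equiv (M := M) h = h • Word.empty := rfl
  rw [this, Word.prod_smul, Word.prod_empty, mul_one]

theorem rho_ne_one {h : CoprodI M} (hh : h ≠ 1) :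
    rho ((Word.equiv h).toList.length) h ≠ 1 := by
  set n := (Word.equiv (M := M) h).toList.length with hn
  intro h1
  have he := rho_prod_apply (n := n) (Word.equiv h) le_rfl
  rw [prod_equiv_self, h1] at he
  have : Word.equiv (M := M) h = Word.empty := by
    have := congrArg Subtype.val he
    simpa [bempty, id_eq] using this.symm
  apply hh
  rw [← prod_equiv_self h, this, Word.prod_empty]

/-- Residual finiteness of a free product of finite groups. -/
theorem exists_hom_ne_one [Finite ι] [∀ i, Finite (M i)] {h : CoprodI M} (hh : h ≠ 1) :
    ∃ (F : Type) (_ : Group F) (_ : Finite F) (χ : CoprodI M →* F), χ h ≠ 1 := by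
  refine ⟨Equiv.Perm (BWord M ((Word.equiv h).toList.length)), inferInstance, ?_,
    rho _, rho_ne_one hh⟩
  infer_instance

end Stmt4Aux

namespace Stmt4Aux
open Monoid Monoid.CoprodI Monoid.CoprodI.Word Multiplicative

variable {ι : Type} [DecidableEq ι] {M : ι → Type} [∀ i, Group (M i)]
  [∀ i, DecidableEq (M i)]

theorem equiv_one : Word.equiv (M := M) 1 = Word.empty := by
  have : Word.equiv (M := M) 1 = (1 : CoprodI M) • Word.empty := rfl
  rw [this, one_smul]

theorem equiv_prod (w : Word M) : Word.equiv w.prod = w := by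
  have : w.prod = (Word.equiv (M := M)).symm w := rfl
  rw [this, Equiv.apply_symm_apply]

theorem letterwise_ne_one {N : ι → Type} [∀ i, Group (N i)] [∀ i, DecidableEq (N i)]
    (f : ∀ i, M i →* N i) {h : CoprodI M} (hh : h ≠ 1)
    (hf : ∀ l : Σ i, M i, l ∈ (Word.equiv h).toList → f l.1 l.2 ≠ 1) :
    CoprodI.lift (fun i => (CoprodI.of (M := N)).comp (f i)) h ≠ 1 := by
  set w := Word.equiv (M := M) h with hw
  have hchain := w.chain_ne
  set L : List (Σ i, N i) := w.toList.map (fun l => ⟨l.1, f l.1 l.2⟩) with hL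
  have hw' : ∃ w' : Word N, w'.toList = L := by
    refine ⟨⟨L, ?_, ?_⟩, rfl⟩
    · rintro l' hl'
      rw [hL, List.mem_map] at hl'
      obtain ⟨l, hl, rfl⟩ := hl'
      exact hf l hl
    · rw [hL, List.isChain_map]
      exact hchain.imp (fun {a b} hab => hab)
  obtain ⟨w', hw'⟩ := hw'
  have key : CoprodI.lift (fun i => (CoprodI.of (M := N)).comp (f i)) h = w'.prod := by
    conv_lhs => rw [← prod_equiv_self h]
    rw [Word.prod, map_list_prod, Word.prod, hw', hL, List.map_map, List.map_map]
    refine congrArg List.prod (List.map_congr_left fun l _ => ?_)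
    simp
  intro hone
  rw [key] at hone
  have : w' = Word.empty := by
    rw [← equiv_prod w', hone, equiv_one]
  apply hh
  have : w.toList = [] := by
    have := congrArg Word.toList this
    rw [hw'] at this
    simpa [hL, Word.empty] using this
  have : w = Word.empty := Word.ext (by simpa [Word.empty] using this)
  rw [← prod_equiv_self h, ← hw, this, Word.prod_empty]

end Stmt4Aux

namespace Stmt4Aux
open Monoid Monoid.CoprodI Multiplicative

theorem zmod_hom_ext {k : ℕ} [NeZero k] {H : Type*} [Monoid H]
    {f g : Multiplicative (ZMod k) →* H} (h : f (ofAdd 1) = g (ofAdd 1)) : f = g := by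
  refine MonoidHom.ext fun x => ?_
  have hx : x = (ofAdd (1 : ZMod k)) ^ (Multiplicative.toAdd x : ZMod k).val := by
    rw [← ofAdd_nsmul]
    have : ((Multiplicative.toAdd x : ZMod k).val : ℕ) • (1 : ZMod k) = Multiplicative.toAdd x := by
      rw [nsmul_eq_mul, mul_one, ZMod.natCast_val, ZMod.cast_id]
    rw [this, ofAdd_toAdd]
  rw [hx, map_pow, map_pow, h]

variable (r s : ℕ) (m : Fin s → ℕ)

/-- The family of cyclic groups: `ℤ` for each free generator, `ℤ/mᵢ` for each torsion one. -/
def MM : Fin r ⊕ Fin s → Type :=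
  Sum.elim (fun _ => Multiplicative ℤ) (fun i => Multiplicative (ZMod (m i)))

instance : ∀ x, Group (MM r s m x) := fun x =>
  match x with
  | .inl _ => (inferInstance : Group (Multiplicative ℤ))
  | .inr _ => (inferInstance : Group (Multiplicative (ZMod _)))

instance : ∀ x, DecidableEq (MM r s m x) := fun x =>
  match x with
  | .inl _ => (inferInstance : DecidableEq (Multiplicative ℤ))
  | .inr _ => (inferInstance : DecidableEq (Multiplicative (ZMod _)))

/-- The group in the statement. -/
abbrev GG : Type :=
  Monoid.Coprod (FreeGroup (Fin r)) (Monoid.CoprodI fun i : Fin s => Multiplicative (ZMod (m i)))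

/-- The forward isomorphism `GG → CoprodI MM`. -/
def Phi : GG r s m →* CoprodI (MM r s m) :=
  Coprod.lift
    (FreeGroup.lift fun j => CoprodI.of (M := MM r s m) (i := Sum.inl j) (ofAdd (1 : ℤ)))
    (CoprodI.lift fun i => (CoprodI.of (M := MM r s m) (i := Sum.inr i)))

/-- The backward isomorphism. -/
def Psi : CoprodI (MM r s m) →* GG r s m :=
  CoprodI.lift fun x =>
    Sum.rec (motive := fun x => MM r s m x →* GG r s m)
      (fun j => show Multiplicative ℤ →* GG r s m from zpowersHom (GG r s m) (Coprod.inl (FreeGroup.of j)))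
      (fun i => show Multiplicative (ZMod (m i)) →* GG r s m from
        Coprod.inr.comp (CoprodI.of (M := fun i : Fin s => Multiplicative (ZMod (m i))) (i := i))) x

theorem Phi_inl (j : Fin r) :
    Phi r s m (Coprod.inl (FreeGroup.of j)) =
      CoprodI.of (M := MM r s m) (i := Sum.inl j) (ofAdd (1 : ℤ)) := by
  rw [Phi, Coprod.lift_apply_inl, FreeGroup.lift_apply_of]

theorem Phi_inr (i : Fin s) (x : Multiplicative (ZMod (m i))) :
    Phi r s m (Coprod.inr
        (CoprodI.of (M := fun i : Fin s => Multiplicative (ZMod (m i))) x)) =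
      CoprodI.of (M := MM r s m) (i := Sum.inr i) x := by
  rw [Phi, Coprod.lift_apply_inr]; erw [CoprodI.lift_of]

theorem Psi_inl (j : Fin r) (a : Multiplicative ℤ) :
    Psi r s m (CoprodI.of (M := MM r s m) (i := Sum.inl j) a) =
      (Coprod.inl (FreeGroup.of j) : GG r s m) ^ a.toAdd := by
  rw [Psi]; erw [CoprodI.lift_of]; rfl

theorem Psi_inr (i : Fin s) (x : Multiplicative (ZMod (m i))) :
    Psi r s m (CoprodI.of (M := MM r s m) (i := Sum.inr i) x) =
      Coprod.inr (CoprodI.of (M := fun i : Fin s => Multiplicative (ZMod (m i))) x) := by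
  rw [Psi]; erw [CoprodI.lift_of]

theorem Psi_comp_Phi : (Psi r s m).comp (Phi r s m) = MonoidHom.id _ := by
  apply Coprod.hom_ext
  · refine MonoidHom.ext fun j => ?_
    simp only [MonoidHom.comp_apply, MonoidHom.id_apply]
    induction j using FreeGroup.induction_on with
    | C1 => simp
    | of x =>
        show (Psi r s m) ((Phi r s m) (Coprod.inl (FreeGroup.of x))) = Coprod.inl (FreeGroup.of x)
        rw [Phi_inl]; erw [Psi_inl]
    | inv_of x ih => rw [map_inv, map_inv, map_inv, ih]
    | mul x y ihx ihy => rw [map_mul, map_mul, map_mul, ihx, ihy]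
  · refine CoprodI.ext_hom _ _ fun i => MonoidHom.ext fun x => ?_
    simp only [MonoidHom.comp_apply, MonoidHom.id_apply]
    rw [Phi_inr, Psi_inr]

theorem Phi_comp_Psi : (Phi r s m).comp (Psi r s m) = MonoidHom.id _ := by
  refine CoprodI.ext_hom _ _ fun x => ?_
  cases x with
  | inl j =>
    apply MonoidHom.ext_mint
    show Phi r s m (Psi r s m (CoprodI.of (M := MM r s m) (i := Sum.inl j) (ofAdd (1 : ℤ)))) =
      CoprodI.of (M := MM r s m) (i := Sum.inl j) (ofAdd (1 : ℤ))
    erw [Psi_inl]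
    erw [toAdd_ofAdd]
  | inr i =>
    refine MonoidHom.ext fun x => ?_
    simp only [MonoidHom.comp_apply, MonoidHom.id_apply]
    erw [Psi_inr, Phi_inr]

theorem Phi_injective : Function.Injective (Phi r s m) := by
  intro a b h
  have := congrArg (Psi r s m) h
  have h1 := DFunLike.congr_fun (Psi_comp_Phi r s m) a
  have h2 := DFunLike.congr_fun (Psi_comp_Phi r s m) b
  simp only [MonoidHom.comp_apply, MonoidHom.id_apply] at h1 h2
  rw [← h1, ← h2, this]

end Stmt4Aux

namespace Stmt4Aux
open Monoid Monoid.CoprodI Multiplicative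

variable (r s : ℕ) (m : Fin s → ℕ)

/-- The finite target family, with `ℤ` replaced by `ℤ/N`. -/
def NN (N : ℕ) : Fin r ⊕ Fin s → Type :=
  Sum.elim (fun _ => Multiplicative (ZMod N)) (fun i => Multiplicative (ZMod (m i)))

instance (N : ℕ) : ∀ x, Group (NN r s m N x) := fun x =>
  match x with
  | .inl _ => (inferInstance : Group (Multiplicative (ZMod N)))
  | .inr _ => (inferInstance : Group (Multiplicative (ZMod _)))

instance (N : ℕ) : ∀ x, DecidableEq (NN r s m N x) := fun x =>
  match x with
  | .inl _ => (inferInstance : DecidableEq (Multiplicative (ZMod N)))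
  | .inr _ => (inferInstance : DecidableEq (Multiplicative (ZMod _)))

theorem NN_finite (N : ℕ) [NeZero N] (hm : ∀ i, 2 ≤ m i) : ∀ x, Finite (NN r s m N x) :=
  fun x =>
    match x with
    | .inl _ => (inferInstance : Finite (Multiplicative (ZMod N)))
    | .inr i =>
      haveI : NeZero (m i) := ⟨by have := hm i; omega⟩
      (inferInstance : Finite (Multiplicative (ZMod (m i))))

/-- The letterwise reduction homomorphisms. -/
def ff (N : ℕ) : ∀ x, MM r s m x →* NN r s m N x := fun x =>
  Sum.rec (motive := fun x => MM r s m x →* NN r s m N x)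
    (fun _ => show Multiplicative ℤ →* Multiplicative (ZMod N) from
      AddMonoidHom.toMultiplicative (Int.castAddHom (ZMod N)))
    (fun _ => show Multiplicative (ZMod _) →* Multiplicative (ZMod _) from MonoidHom.id _) x

/-- Size of a letter (absolute value of the exponent for `ℤ`-letters). -/
def letterSize : (Σ x, MM r s m x) → ℕ := fun l =>
  Sum.rec (motive := fun x => MM r s m x → ℕ)
    (fun _ a => (Multiplicative.toAdd a).natAbs) (fun _ _ => 0) l.1 l.2

theorem GG_exists_hom_ne_one (hm : ∀ i, 2 ≤ m i) {g : GG r s m} (hg : g ≠ 1) :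
    ∃ (F : Type) (_ : Group F) (_ : Finite F) (χ : GG r s m →* F), χ g ≠ 1 := by
  have hh : Phi r s m g ≠ 1 := by
    intro h0
    exact hg (Phi_injective r s m (by rw [h0, map_one]))
  set w := Word.equiv (Phi r s m g) with hwdef
  set N := (w.toList.map (letterSize r s m)).sum + 1 with hN
  haveI : NeZero N := ⟨Nat.succ_ne_zero _⟩
  haveI : ∀ x, Finite (NN r s m N x) := NN_finite r s m N hm
  have hf : ∀ l : Σ x, MM r s m x, l ∈ w.toList → ff r s m N l.1 l.2 ≠ 1 := by
    rintro ⟨x, a⟩ hl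
    cases x with
    | inr i => exact w.ne_one _ hl
    | inl j =>
      have ha : (show Multiplicative ℤ from a) ≠ 1 := w.ne_one _ hl
      intro h1
      have h1' : (AddMonoidHom.toMultiplicative (Int.castAddHom (ZMod N)))
          (show Multiplicative ℤ from a) = 1 := h1
      have hcast : ((Multiplicative.toAdd (show Multiplicative ℤ from a) : ℤ) : ZMod N) = 0 := by
        have := congrArg Multiplicative.toAdd h1'
        exact this
      set b : ℤ := Multiplicative.toAdd (show Multiplicative ℤ from a) with hb
      have hdvd : ((N : ℕ) : ℤ) ∣ b := (ZMod.intCast_zmod_eq_zero_iff_dvd _ _).mp hcast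
      have hle : b.natAbs ≤ (w.toList.map (letterSize r s m)).sum := by
        have hmem := List.mem_map_of_mem (f := letterSize r s m) hl
        exact List.single_le_sum (fun _ _ => Nat.zero_le _) _ hmem
      have habs : |b| < ((N : ℕ) : ℤ) := by
        rw [Int.abs_eq_natAbs]
        exact_mod_cast show b.natAbs < N by omega
      have hb0 : b = 0 := Int.eq_zero_of_abs_lt_dvd hdvd habs
      apply ha
      have hofAdd : (show Multiplicative ℤ from a) = Multiplicative.ofAdd b :=
        (ofAdd_toAdd _).symm
      rw [hofAdd, hb0]
      rfl
  have hθ := letterwise_ne_one (ff r s m N) hh hf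
  obtain ⟨F, instG, instF, χ, hχ⟩ := exists_hom_ne_one hθ
  refine ⟨F, instG, instF,
    χ.comp ((CoprodI.lift fun x =>
      (CoprodI.of (M := NN r s m N)).comp (ff r s m N x)).comp (Phi r s m)), ?_⟩
  simpa using hχ

theorem GG_hom_finite (hm : ∀ i, 2 ≤ m i) (F : Type) [Group F] [Finite F] :
    Finite (GG r s m →* F) := by
  refine Finite.of_injective (fun ψ : GG r s m →* F => (fun x : Fin r ⊕ Fin s =>
    Sum.elim (fun j => ψ (Coprod.inl (FreeGroup.of j)))
      (fun i => ψ (Coprod.inr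
        (CoprodI.of (M := fun i : Fin s => Multiplicative (ZMod (m i))) (i := i)
          (ofAdd 1)))) x)) ?_
  intro ψ₁ ψ₂ hψ
  have h := fun x => congrFun hψ x
  apply Coprod.hom_ext
  · ext j
    simpa using h (Sum.inl j)
  · refine CoprodI.ext_hom _ _ fun i => ?_
    haveI : NeZero (m i) := ⟨by have := hm i; omega⟩
    apply zmod_hom_ext (k := m i)
    simpa using h (Sum.inr i)

end Stmt4Aux


noncomputable section

/-- Every finitely generated free product of cyclic groups
`G = 𝔽_r * ℤ_{m₁} * ⋯ * ℤ_{m_s}` is Hopfian: every surjective endomorphism of `G`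
is an isomorphism. -/
theorem stmt_4 (r s : ℕ) (m : Fin s → ℕ) (hm : ∀ i, 2 ≤ m i)
    (φ : Monoid.Coprod (FreeGroup (Fin r))
          (Monoid.CoprodI fun i : Fin s => Multiplicative (ZMod (m i))) →*
        Monoid.Coprod (FreeGroup (Fin r))
          (Monoid.CoprodI fun i : Fin s => Multiplicative (ZMod (m i))))
    (hφ : Function.Surjective φ) :
    Function.Bijective φ := by
  refine ⟨?_, hφ⟩
  rw [injective_iff_map_eq_one]
  intro a ha
  by_contra hne
  obtain ⟨F, instG, instF, χ, hχ⟩ := Stmt4Aux.GG_exists_hom_ne_one r s m hm hne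
  letI := instG
  letI := instF
  haveI : Finite (Stmt4Aux.GG r s m →* F) := Stmt4Aux.GG_hom_finite r s m hm F
  have hinj : Function.Injective
      (fun ψ : Stmt4Aux.GG r s m →* F => ψ.comp φ) := by
    intro ψ₁ ψ₂ h
    refine MonoidHom.ext fun x => ?_
    obtain ⟨y, rfl⟩ := hφ x
    exact DFunLike.congr_fun h y
  obtain ⟨ψ, hψ⟩ := Finite.injective_iff_surjective.mp hinj χ
  apply hχ
  rw [← hψ]
  show ψ (φ a) = 1
  rw [ha, map_one]

end
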